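/- In the synergistic relationship game with payoff π(x,y) = x(c + y − x), c > 0, on a compact X ⊂ ℝ≥0, the relative payoff function is Δ(x,y) = (cx − x²) − (cy − y²), hence the game is an exact potential game and imitation is essentially unbeatable. -/

import Mathlib

/-- Synergistic relationship game: with `π(x,y) = x(c + y - x)`, `c > 0`, on a
compact `X ⊂ ℝ≥0`, the relative payoff function is
`Δ(x,y) = (cx - x²) - (cy - y²)`, hence the game is an exact potential game and
imitation is essentially unbeatable. -/
theorem synergistic_unbeatable (X : Set ℝ) (hX : IsCompact X)
    (hXne : X.Nonempty) (hXpos : ∀ z ∈ X, 0 ≤ z)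
    (c : ℝ) (hc : 0 < c)
    (π : ℝ → ℝ → ℝ) (hπ : ∀ x y, π x y = x * (c + y - x))
    (Δ : ℝ → ℝ → ℝ) (hΔ : ∀ x y, Δ x y = π x y - π y x)
    (x y : ℕ → ℝ) (hxX : ∀ t, x t ∈ X) (hyX : ∀ t, y t ∈ X)
    (hrule : ∀ t, (0 < Δ (x t) (y t) → y (t + 1) = x t) ∧
      (y (t + 1) = x t ∨ y (t + 1) = y t)) :
    (∀ u v : ℝ, Δ u v = (c * u - u ^ 2) - (c * v - v ^ 2)) ∧
      ∀ T, ∑ t ∈ Finset.range (T + 1), Δ (x t) (y t) ≤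
        sSup {d : ℝ | ∃ u ∈ X, ∃ v ∈ X, d = Δ u v} := by
  set F : ℝ → ℝ := fun z => c * z - z ^ 2 with hF
  have hΔeq : ∀ u v : ℝ, Δ u v = F u - F v := by
    intro u v
    simp only [hΔ, hπ, hF]
    ring
  refine ⟨hΔeq, ?_⟩
  -- Each step is bounded by the potential increment
  have hstep : ∀ t, Δ (x t) (y t) ≤ F (y (t + 1)) - F (y t) := by
    intro t
    rcases (hrule t).2 with h | h
    · rw [h, hΔeq]
    · rw [h]
      simp only [sub_self]
      by_contra hlt
      push_neg at hlt
      have := (hrule t).1 hlt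
      rw [this] at h
      rw [h] at hlt
      rw [hΔeq, sub_self] at hlt
      exact lt_irrefl 0 hlt
  -- Partial sums telescope
  have hsum : ∀ T, ∑ t ∈ Finset.range T, Δ (x t) (y t) ≤ F (y T) - F (y 0) := by
    intro T
    induction T with
    | zero => simp
    | succ n ih =>
      rw [Finset.sum_range_succ]
      have := hstep n
      linarith
  -- The set of Δ-values is the continuous image of a compact set
  set S : Set ℝ := {d : ℝ | ∃ u ∈ X, ∃ v ∈ X, d = Δ u v} with hS
  have hSimg : S = (fun p : ℝ × ℝ => Δ p.1 p.2) '' (X ×ˢ X) := by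
    ext d
    constructor
    · rintro ⟨u, hu, v, hv, rfl⟩
      exact ⟨(u, v), ⟨hu, hv⟩, rfl⟩
    · rintro ⟨⟨u, v⟩, ⟨hu, hv⟩, rfl⟩
      exact ⟨u, hu, v, hv, rfl⟩
  have hcont : Continuous fun p : ℝ × ℝ => Δ p.1 p.2 := by
    have : (fun p : ℝ × ℝ => Δ p.1 p.2) = fun p : ℝ × ℝ => F p.1 - F p.2 := by
      funext p; exact hΔeq p.1 p.2
    rw [this]
    fun_prop
  have hbdd : BddAbove S := by
    rw [hSimg]
    exact ((hX.prod hX).image hcont).bddAbove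
  intro T
  have hmem : Δ (y (T + 1)) (y 0) ∈ S :=
    ⟨y (T + 1), hyX (T + 1), y 0, hyX 0, rfl⟩
  have hle := le_csSup hbdd hmem
  have := hsum (T + 1)
  rw [hΔeq] at hle
  linarith
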